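/- Let K be a difference subfield of U with σ(K) = K, a a finite tuple with σ(a) ∈ K(a)^alg, and c a finite tuple with coordinates in K(a)_σ such that a ∈ K(c)^alg and σ(c) ∈ K(c,σ^ℓ(c)) for every ℓ > 0. Let d be a finite tuple with σ(d) ∈ K(d)^alg, K(d)^alg = K(a)^alg and ld(d/K) = dd(a/K). Then ld((c,d)/K) = dd(a/K). -/

import Mathlib

/- Setting: a large algebraically closed field `U` with an automorphism `σ`.
   Tuples are maps `Fin n → U`; for a tuple `t`, the relevant set of coordinates
   is `Set.range t`.  `fAdj E s` is the subfield `E(s)` generated by a subfield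
   `E` and a set `s`, and `deg E s` is the degree `μ(s/E) = [E(s):E]`. -/

set_option maxHeartbeats 1000000
set_option synthInstance.maxHeartbeats 1000000

open Filter Set

variable {U : Type*}

/-- The subfield `E(s)` generated by the subfield `E` and the set `s`. -/
noncomputable def fAdj [Field U] (E : Subfield U) (s : Set U) : Subfield U :=
  (IntermediateField.adjoin E s).toSubfield

/-- The degree `μ(s/E) = [E(s):E]` (as `Module.finrank`; it is `0` when infinite). -/
noncomputable def deg [Field U] (E : Subfield U) (s : Set U) : ℕ :=
  Module.finrank E (IntermediateField.adjoin E s)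

/-- `k ↦ μ(σ^{k+1}(s) / K(s, σ(s), …, σ^k(s)))`: the sequence whose eventual
value is the limit degree `ld(s/K)`. -/
noncomputable def ldSeq [Field U] (σ : U ≃+* U) (K : Subfield U) (s : Set U) (k : ℕ) : ℕ :=
  deg (fAdj K (⋃ i ∈ Set.Iic k, ⇑(σ ^ i) '' s)) (⇑(σ ^ (k + 1)) '' s)

/-- `k ↦ μ(σ^k(s) / K(s))`: the sequence whose `k`-th roots converge to the
distant degree `dd(s/K)`. -/
noncomputable def ddSeq [Field U] (σ : U ≃+* U) (K : Subfield U) (s : Set U) (k : ℕ) : ℕ :=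
  deg (fAdj K s) (⇑(σ ^ k) '' s)

/-- The inversive closure `K^inv = ⋃ₙ σ^{-n}(K)`. -/
noncomputable def Kinv [Field U] (σ : U ≃+* U) (K : Subfield U) : Subfield U :=
  ⨆ n : ℕ, K.map (σ⁻¹ ^ n : U ≃+* U).toRingHom

/-- The difference field `K(s)_σ = K(σ^i(s) : i ∈ ℕ)` generated by `s` over `K`. -/
noncomputable def diffAdj [Field U] (σ : U ≃+* U) (K : Subfield U) (s : Set U) : Subfield U :=
  fAdj K (⋃ i : ℕ, ⇑(σ ^ i) '' s)


/-! ### Infrastructure -/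

section Infra
variable [Field U] {E F B : Subfield U} {s t : Set U} {x : U}

lemma fAdj_eq_closure (E : Subfield U) (s : Set U) :
    fAdj E s = Subfield.closure (↑E ∪ s) := by
  rw [fAdj, IntermediateField.adjoin_toSubfield]
  congr 1
  have : Set.range (algebraMap E U) = (E : Set U) := by
    ext y
    constructor
    · rintro ⟨a, rfl⟩; exact a.2
    · intro hy; exact ⟨⟨y, hy⟩, rfl⟩
  rw [this]

lemma le_fAdj (E : Subfield U) (s : Set U) : E ≤ fAdj E s := by
  rw [fAdj_eq_closure]
  exact fun y hy => Subfield.subset_closure (Or.inl hy)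

lemma subset_fAdj (E : Subfield U) (s : Set U) : s ⊆ ↑(fAdj E s) := by
  rw [fAdj_eq_closure]
  exact fun y hy => Subfield.subset_closure (Or.inr hy)

lemma fAdj_le (hE : E ≤ B) (hs : s ⊆ ↑B) : fAdj E s ≤ B := by
  rw [fAdj_eq_closure]
  exact Subfield.closure_le.2 (Set.union_subset hE hs)

lemma fAdj_mono_set (E : Subfield U) (h : s ⊆ t) : fAdj E s ≤ fAdj E t :=
  fAdj_le (le_fAdj E t) (h.trans (subset_fAdj E t))

lemma fAdj_mono_base (h : E ≤ F) (s : Set U) : fAdj E s ≤ fAdj F s :=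
  fAdj_le (h.trans (le_fAdj F s)) (subset_fAdj F s)

lemma fAdj_fAdj (E : Subfield U) (s t : Set U) :
    fAdj (fAdj E s) t = fAdj E (s ∪ t) := by
  apply le_antisymm
  · exact fAdj_le (fAdj_le (le_fAdj _ _) ((Set.subset_union_left).trans (subset_fAdj _ _)))
      ((Set.subset_union_right).trans (subset_fAdj _ _))
  · exact fAdj_le (le_fAdj E s |>.trans (le_fAdj _ _))
      (Set.union_subset ((subset_fAdj E s).trans (le_fAdj (fAdj E s) t))
        (subset_fAdj _ _))

lemma fAdj_empty (E : Subfield U) : fAdj E (∅ : Set U) = E :=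
  le_antisymm (fAdj_le le_rfl (Set.empty_subset _)) (le_fAdj E ∅)

lemma deg_eq_relfinrank (E : Subfield U) (s : Set U) :
    deg E s = Subfield.relfinrank E (fAdj E s) := by
  rw [Subfield.relfinrank_eq_finrank_of_le (le_fAdj E s), deg]
  congr 1

lemma map_fAdj (f : U →+* U) (E : Subfield U) (s : Set U) :
    (fAdj E s).map f = fAdj (E.map f) (f '' s) := by
  rw [fAdj_eq_closure, fAdj_eq_closure, RingHom.map_field_closure, Set.image_union,
    Subfield.coe_map]

lemma deg_map (f : U →+* U) (E : Subfield U) (s : Set U) :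
    deg (E.map f) (f '' s) = deg E s := by
  rw [deg_eq_relfinrank, deg_eq_relfinrank, ← map_fAdj, Subfield.relfinrank_map_map]

lemma deg_union (E : Subfield U) (s t : Set U) :
    deg E (s ∪ t) = deg E s * deg (fAdj E s) t := by
  rw [deg_eq_relfinrank, deg_eq_relfinrank, deg_eq_relfinrank, fAdj_fAdj]
  exact (Subfield.relfinrank_mul_relfinrank (le_fAdj E s)
    (fAdj_mono_set E Set.subset_union_left)).symm

lemma relfinrank_dvd (h1 : E ≤ F) (h2 : F ≤ B) :
    Subfield.relfinrank E F ∣ Subfield.relfinrank E B :=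
  ⟨_, (Subfield.relfinrank_mul_relfinrank h1 h2).symm⟩

lemma relfinrank_le (h1 : E ≤ F) (h2 : F ≤ B) (hpos : 0 < Subfield.relfinrank E B) :
    Subfield.relfinrank E F ≤ Subfield.relfinrank E B :=
  Nat.le_of_dvd hpos (relfinrank_dvd h1 h2)

lemma isIntegral_of_mem (hx : x ∈ E) : IsIntegral E x := by
  have : x = algebraMap E U ⟨x, hx⟩ := rfl
  rw [this]
  exact isIntegral_algebraMap

lemma IsIntegral.of_le (h : E ≤ F) (hx : IsIntegral E x) : IsIntegral F x := by
  obtain ⟨p, hm, he⟩ := hx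
  refine ⟨p.map (Subfield.inclusion h), hm.map _, ?_⟩
  rw [Polynomial.eval₂_map]
  have hc : (algebraMap F U).comp (Subfield.inclusion h) = algebraMap E U := by
    ext y; rfl
  rw [hc]
  exact he

lemma IsIntegral.equiv_map (f : U ≃+* U) (hx : IsIntegral E x) :
    IsIntegral (E.map f.toRingHom) (f x) := by
  obtain ⟨p, hm, he⟩ := hx
  have hmem : ∀ y : E, f.toRingHom (algebraMap E U y) ∈ E.map f.toRingHom :=
    fun y => ⟨y, y.2, rfl⟩
  let g : E →+* (E.map f.toRingHom) :=
    (f.toRingHom.comp (algebraMap E U)).codRestrict _ (fun y => hmem y)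
  refine ⟨p.map g, hm.map _, ?_⟩
  rw [Polynomial.eval₂_map]
  have hcomp : (algebraMap (E.map f.toRingHom) U).comp g
      = f.toRingHom.comp (algebraMap E U) := by
    ext y; rfl
  rw [hcomp]
  have h2 := Polynomial.hom_eval₂ p (algebraMap E U) f.toRingHom x
  show Polynomial.eval₂ (f.toRingHom.comp (algebraMap (↥E) U)) (f.toRingHom x) p = 0
  rw [← h2, he, map_zero]

lemma deg_pos (hs : s.Finite) (hint : ∀ y ∈ s, IsIntegral E y) : 0 < deg E s := by
  haveI := hs.to_subtype
  haveI := IntermediateField.finiteDimensional_adjoin (K := E) (L := U) hint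
  exact Module.finrank_pos

lemma deg_empty (E : Subfield U) : deg E (∅ : Set U) = 1 := by
  rw [deg, show IntermediateField.adjoin E (∅ : Set U) = ⊥ from IntermediateField.adjoin_empty E U]
  exact IntermediateField.finrank_bot

lemma relfinrank_fAdj_pos (hs : s.Finite) (hint : ∀ y ∈ s, IsIntegral E y) :
    0 < Subfield.relfinrank E (fAdj E s) := by
  rw [← deg_eq_relfinrank]; exact deg_pos hs hint

lemma isIntegral_of_mem_of_relfinrank_pos (hEB : E ≤ B) (hpos : 0 < Subfield.relfinrank E B)
    (hx : x ∈ B) : IsIntegral E x := by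
  rw [Subfield.relfinrank_eq_finrank_of_le hEB] at hpos
  haveI : Module.Finite E (Subfield.extendScalars hEB) := Module.finite_of_finrank_pos hpos
  have h1 : IsIntegral E (⟨x, (Subfield.mem_extendScalars hEB).2 hx⟩ :
      Subfield.extendScalars hEB) := IsIntegral.of_finite _ _
  exact h1.map (Subfield.extendScalars hEB).val

lemma isIntegral_of_mem_fAdj (hs : s.Finite) (hint : ∀ y ∈ s, IsIntegral E y)
    (hx : x ∈ fAdj E s) : IsIntegral E x :=
  isIntegral_of_mem_of_relfinrank_pos (le_fAdj E s) (relfinrank_fAdj_pos hs hint) hx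

lemma isIntegral_fAdj_trans (hs : s.Finite) (hint : ∀ y ∈ s, IsIntegral E y)
    (hx : IsIntegral (fAdj E s) x) : IsIntegral E x := by
  refine isIntegral_of_mem_of_relfinrank_pos (B := fAdj E (s ∪ {x}))
    (le_fAdj E _) ?_ (subset_fAdj E _ (Or.inr rfl))
  rw [← deg_eq_relfinrank, deg_union]
  exact Nat.mul_pos (deg_pos hs hint)
    (deg_pos (Set.finite_singleton x) (fun y hy => by rw [hy]; exact hx))

lemma deg_mono_set (hst : s ⊆ t) (ht : t.Finite) (hint : ∀ y ∈ t, IsIntegral E y) :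
    deg E s ≤ deg E t := by
  rw [deg_eq_relfinrank, deg_eq_relfinrank]
  exact relfinrank_le (le_fAdj E s) (fAdj_mono_set E hst) (relfinrank_fAdj_pos ht hint)

lemma deg_singleton (hx : IsIntegral E x) : deg E {x} = (minpoly E x).natDegree := by
  rw [deg]
  exact IntermediateField.adjoin.finrank hx

lemma minpoly_natDegree_mono (h : E ≤ F) (hx : IsIntegral E x) :
    (minpoly F x).natDegree ≤ (minpoly E x).natDegree := by
  have hmap : ((minpoly E x).map (Subfield.inclusion h)).Monic := (minpoly.monic hx).map _
  have haev : Polynomial.aeval x ((minpoly E x).map (Subfield.inclusion h)) = 0 := by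
    rw [Polynomial.aeval_def, Polynomial.eval₂_map]
    have hc : (algebraMap F U).comp (Subfield.inclusion h) = algebraMap E U := by ext y; rfl
    rw [hc]
    exact minpoly.aeval _ _
  have hdeg := Polynomial.natDegree_le_natDegree (minpoly.min F x hmap haev)
  exact hdeg.trans Polynomial.natDegree_map_le

lemma deg_anti_base (h : E ≤ F) (hs : s.Finite) (hint : ∀ y ∈ s, IsIntegral E y) :
    deg F s ≤ deg E s := by
  classical
  obtain ⟨u, rfl⟩ : ∃ u : Finset U, ↑u = s := ⟨hs.toFinset, hs.coe_toFinset⟩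
  clear hs
  induction u using Finset.induction generalizing E F with
  | empty => simp [deg_empty]
  | insert a u hnotmem ih =>
    rw [Finset.coe_insert, Set.insert_eq, deg_union, deg_union]
    have hxa : IsIntegral E a := hint a (by simp)
    have h1 : deg F {a} ≤ deg E {a} := by
      rw [deg_singleton hxa, deg_singleton (hxa.of_le h)]
      exact minpoly_natDegree_mono h hxa
    have h2 : deg (fAdj F {a}) ↑u ≤ deg (fAdj E {a}) ↑u := by
      refine ih (fAdj_mono_base h {a}) (fun y hy => ?_)
      exact (hint y (by simp [hy])).of_le (le_fAdj E {a})
    exact Nat.mul_le_mul h1 h2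

lemma relfinrank_chain (G : ℕ → Subfield U) (hm : ∀ i, G i ≤ G (i+1)) (m k : ℕ) :
    Subfield.relfinrank (G m) (G (m+k)) =
      ∏ j ∈ Finset.range k, Subfield.relfinrank (G (m+j)) (G (m+j+1)) := by
  have hmono : Monotone G := monotone_nat_of_le_succ hm
  induction k with
  | zero => simp
  | succ k ih =>
    rw [Finset.prod_range_succ, ← ih, ← add_assoc,
      Subfield.relfinrank_mul_relfinrank (hmono (Nat.le_add_right m k)) (hm (m+k))]

end Infra


/-! ### sigma layer -/
section Sigma
variable [Field U] (σ : U ≃+* U) {K : Subfield U} {s t w : Set U} {x : U}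

lemma hKpow (hK : K.map σ.toRingHom = K) (k : ℕ) :
    K.map (σ ^ k : U ≃+* U).toRingHom = K := by
  induction k with
  | zero =>
    have : ((σ ^ 0 : U ≃+* U)).toRingHom = RingHom.id U := by
      ext x; rfl
    rw [this]
    ext x
    simp [Subfield.mem_map]
  | succ k ih =>
    have hco : ((σ ^ (k+1) : U ≃+* U)).toRingHom
        = σ.toRingHom.comp ((σ ^ k : U ≃+* U)).toRingHom := by
      ext x
      rw [pow_succ']
      rfl
    rw [hco, ← Subfield.map_map, ih, hK]

lemma image_pow_add (i j : ℕ) (s : Set U) :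
    ⇑(σ ^ i) '' (⇑(σ ^ j) '' s) = ⇑(σ ^ (i + j)) '' s := by
  rw [← Set.image_comp]
  apply Set.image_congr'
  intro y
  rw [pow_add]
  rfl

lemma image_pow_zero (s : Set U) : ⇑(σ ^ 0 : U ≃+* U) '' s = s := by
  have : ⇑(σ ^ 0 : U ≃+* U) = id := by ext x; rfl
  rw [this, Set.image_id]

lemma coe_pow_toRingHom (k : ℕ) : ⇑((σ ^ k : U ≃+* U)).toRingHom = ⇑(σ ^ k) := rfl

lemma fAdj_map_pow (hK : K.map σ.toRingHom = K) (k : ℕ) (t : Set U) :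
    fAdj K (⇑(σ ^ k) '' t) = (fAdj K t).map ((σ ^ k : U ≃+* U)).toRingHom := by
  rw [map_fAdj, hKpow σ hK k, coe_pow_toRingHom]

lemma deg_twist (hK : K.map σ.toRingHom = K) (k : ℕ) (t w : Set U) :
    deg (fAdj K (⇑(σ ^ k) '' t)) (⇑(σ ^ k) '' w) = deg (fAdj K t) w := by
  rw [fAdj_map_pow σ hK k t, ← coe_pow_toRingHom σ k]
  exact deg_map _ _ _

lemma isIntegral_twist (hK : K.map σ.toRingHom = K) (k : ℕ)
    (h : IsIntegral (fAdj K t) x) :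
    IsIntegral (fAdj K (⇑(σ ^ k) '' t)) ((σ ^ k) x) := by
  rw [fAdj_map_pow σ hK k t]
  exact h.equiv_map _

lemma mem_fAdj_twist (hK : K.map σ.toRingHom = K) (k : ℕ)
    (h : x ∈ fAdj K t) : (σ ^ k) x ∈ fAdj K (⇑(σ ^ k) '' t) := by
  rw [fAdj_map_pow σ hK k t]
  exact ⟨x, h, rfl⟩

end Sigma


section Chain
variable [Field U] (σ : U ≃+* U) (K P : Subfield U) (t : Set U)

noncomputable def chainF (k : ℕ) : Subfield U :=
  fAdj K (⋃ i ∈ Set.Iic k, ⇑(σ ^ i) '' t)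

lemma subset_chainF {i k : ℕ} (hik : i ≤ k) : ⇑(σ ^ i) '' t ⊆ ↑(chainF σ K t k) :=
  Set.Subset.trans (Set.subset_biUnion_of_mem (u := fun i => ⇑(σ ^ i) '' t)
    (Set.mem_Iic.2 hik)) (subset_fAdj K _)

lemma chainF_succ (k : ℕ) : chainF σ K t (k+1) = fAdj (chainF σ K t k) (⇑(σ ^ (k+1)) '' t) := by
  rw [chainF, chainF, fAdj_fAdj]
  congr 1
  simp only [Set.mem_Iic]
  exact Set.biUnion_le_succ (fun i => ⇑(σ ^ i) '' t) k

lemma chainF_mono (k : ℕ) : chainF σ K t k ≤ chainF σ K t (k+1) :=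
  fAdj_mono_set K (Set.biUnion_subset_biUnion_left (Set.Iic_subset_Iic.2 (Nat.le_succ k)))

lemma chainF_monotone : Monotone (chainF σ K t) := monotone_nat_of_le_succ (chainF_mono σ K t)

lemma chainF_zero : chainF σ K t 0 = fAdj K t := by
  rw [chainF]
  congr 1
  apply le_antisymm
  · refine Set.iUnion₂_subset fun i hi => ?_
    rw [Set.mem_Iic, Nat.le_zero] at hi
    rw [hi, image_pow_zero]
  · intro y hy
    refine Set.mem_biUnion (Set.mem_Iic.2 le_rfl) ?_
    rw [image_pow_zero]
    exact hy

lemma le_chainF : fAdj K t ≤ chainF σ K t k := by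
  rw [← chainF_zero σ K t]
  exact chainF_monotone σ K t (Nat.zero_le k)

lemma ldSeq_eq_deg (k : ℕ) : ldSeq σ K t k = deg (chainF σ K t k) (⇑(σ ^ (k+1)) '' t) := rfl

lemma ldSeq_eq_relfinrank (k : ℕ) :
    ldSeq σ K t k = Subfield.relfinrank (chainF σ K t k) (chainF σ K t (k+1)) := by
  rw [ldSeq_eq_deg, deg_eq_relfinrank, ← chainF_succ]

lemma ddSeq_eq_deg (k : ℕ) : ddSeq σ K t k = deg (fAdj K t) (⇑(σ ^ k) '' t) := rfl

lemma ldSeq_prod (k : ℕ) :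
    Subfield.relfinrank (chainF σ K t 0) (chainF σ K t k) = ∏ j ∈ Finset.range k, ldSeq σ K t j := by
  have h1 := relfinrank_chain (chainF σ K t) (chainF_mono σ K t) 0 k
  simp only [Nat.zero_add] at h1
  rw [h1]
  exact Finset.prod_congr rfl fun j _ => (ldSeq_eq_relfinrank σ K t j).symm

noncomputable def chainJ (k0 m : ℕ) : Subfield U :=
  fAdj P (⋃ i ∈ Set.Ioc k0 m, ⇑(σ ^ i) '' t)

lemma chainJ_mono (k0 m : ℕ) : chainJ σ P t k0 m ≤ chainJ σ P t k0 (m+1) :=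
  fAdj_mono_set P (Set.biUnion_subset_biUnion_left (fun i hi => by
    rw [Set.mem_Ioc] at hi ⊢
    omega))

lemma chainJ_base (k0 : ℕ) : chainJ σ P t k0 k0 = P := by
  rw [chainJ, show (⋃ i ∈ Set.Ioc k0 k0, ⇑(σ ^ i) '' t) = (∅ : Set U) by simp, fAdj_empty]

lemma le_chainJ (k0 m : ℕ) : P ≤ chainJ σ P t k0 m := le_fAdj _ _

lemma chainJ_succ {k0 m : ℕ} (h : k0 ≤ m) :
    chainJ σ P t k0 (m+1) = fAdj (chainJ σ P t k0 m) (⇑(σ ^ (m+1)) '' t) := by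
  rw [chainJ, chainJ, fAdj_fAdj]
  congr 1
  apply le_antisymm
  · refine Set.iUnion₂_subset fun i hi => ?_
    rw [Set.mem_Ioc] at hi
    rcases Nat.lt_or_ge i (m+1) with h' | h'
    · exact Set.subset_union_of_subset_left
        (Set.subset_biUnion_of_mem (u := fun i => ⇑(σ ^ i) '' t) (Set.mem_Ioc.2 ⟨hi.1, by omega⟩)) _
    · have : i = m + 1 := by omega
      rw [this]
      exact Set.subset_union_right
  · apply Set.union_subset
    · exact Set.biUnion_subset_biUnion_left (fun i hi => by
        rw [Set.mem_Ioc] at hi ⊢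
        omega)
    · exact Set.subset_biUnion_of_mem (u := fun i => ⇑(σ ^ i) '' t) (Set.mem_Ioc.2 ⟨by omega, le_rfl⟩)

end Chain

/-- if `c` is as in Theorem 1.7 and `d` is equi-algebraic with
`a` over `K` with `ld(d/K) = dd(a/K)`, then `ld((c,d)/K) = dd(a/K)`. -/
theorem stmt14 [Field U] [IsAlgClosed U] (σ : U ≃+* U) (K : Subfield U)
    (hK : K.map σ.toRingHom = K) {n p r : ℕ} (a : Fin n → U) (c : Fin p → U) (d : Fin r → U)
    (ha : ∀ i, IsAlgebraic (fAdj K (Set.range a)) (σ (a i)))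
    (hc : ∀ i, c i ∈ diffAdj σ K (Set.range a))
    (hac : ∀ j, IsAlgebraic (fAdj K (Set.range c)) (a j))
    (hcσ : ∀ ℓ : ℕ, 0 < ℓ → ∀ i,
      σ (c i) ∈ fAdj K (Set.range c ∪ ⇑(σ ^ ℓ) '' Set.range c))
    (hd : ∀ i, IsAlgebraic (fAdj K (Set.range d)) (σ (d i)))
    (heq : ∀ x : U, IsAlgebraic (fAdj K (Set.range a)) x ↔
      IsAlgebraic (fAdj K (Set.range d)) x)
    (Da : ℝ)
    (hDa : Tendsto (fun k => (ddSeq σ K (Set.range a) k : ℝ) ^ (1 / (k : ℝ)))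
      atTop (nhds Da))
    (Ld : ℕ) (hLd : ∀ᶠ k in atTop, ldSeq σ K (Set.range d) k = Ld)
    (hLdDa : (Ld : ℝ) = Da)
    (Lcd : ℕ)
    (hLcd : ∀ᶠ k in atTop, ldSeq σ K (Set.range c ∪ Set.range d) k = Lcd) :
    (Lcd : ℝ) = Da := by
  classical
  have hfa : (Set.range a).Finite := Set.finite_range a
  have hfc : (Set.range c).Finite := Set.finite_range c
  have hfd : (Set.range d).Finite := Set.finite_range d
  set ra := Set.range a with hra_def
  set rc := Set.range c with hrc_def
  set rd := Set.range d with hrd_def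
  set s : Set U := rc ∪ rd with hs_def
  have hfs : s.Finite := hfc.union hfd
  have hrcs : rc ⊆ s := by rw [hs_def]; exact Set.subset_union_left
  have hrds : rd ⊆ s := by rw [hs_def]; exact Set.subset_union_right
  set Ea := fAdj K ra with hEa_def
  set Ec := fAdj K rc with hEc_def
  set Ed := fAdj K rd with hEd_def
  set Es := fAdj K s with hEs_def
  have hEcEs : Ec ≤ Es := fAdj_mono_set K Set.subset_union_left
  have hEdEs : Ed ≤ Es := fAdj_mono_set K Set.subset_union_right
  -- generic subset facts
  have hsub0 : ∀ (t : Set U) (k : ℕ), t ⊆ ⋃ i ∈ Set.Iic k, ⇑(σ ^ i) '' t := by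
    intro t k y hy
    refine Set.mem_biUnion (Set.mem_Iic.2 (Nat.zero_le k)) ?_
    rw [image_pow_zero σ t]
    exact hy
  have hfinU : ∀ (t : Set U), t.Finite → ∀ (I : Set ℕ), I.Finite →
      (⋃ i ∈ I, ⇑(σ ^ i) '' t).Finite := by
    intro t ht I hI
    exact hI.biUnion fun i _ => ht.image _
  -- integrality stock
  have Qa : ∀ k : ℕ, ∀ y ∈ ⇑(σ ^ k) '' ra, IsIntegral Ea y := by
    intro k
    induction k with
    | zero =>
      rw [image_pow_zero]
      exact fun y hy => isIntegral_of_mem (subset_fAdj K ra hy)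
    | succ k ih =>
      have h1 : ⇑(σ ^ (k+1)) '' ra = ⇑(σ ^ k) '' (⇑σ '' ra) := by
        rw [show (⇑σ '' ra) = ⇑(σ ^ 1) '' ra by rw [pow_one], image_pow_add σ k 1]
      rw [h1]
      rintro y ⟨z, ⟨w, ⟨i, rfl⟩, rfl⟩, rfl⟩
      have h2 : IsIntegral Ea (σ (a i)) := (ha i).isIntegral
      have h3 := isIntegral_twist σ hK k h2
      have h4 : IsIntegral (fAdj Ea (⇑(σ ^ k) '' ra)) ((σ ^ k) (σ (a i))) :=
        h3.of_le (fAdj_mono_base (le_fAdj K ra) _)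
      exact isIntegral_fAdj_trans (hfa.image _) (ih) h4
  have Qd : ∀ k : ℕ, ∀ y ∈ ⇑(σ ^ k) '' rd, IsIntegral Ed y := by
    intro k
    induction k with
    | zero =>
      rw [image_pow_zero]
      exact fun y hy => isIntegral_of_mem (subset_fAdj K rd hy)
    | succ k ih =>
      have h1 : ⇑(σ ^ (k+1)) '' rd = ⇑(σ ^ k) '' (⇑σ '' rd) := by
        rw [show (⇑σ '' rd) = ⇑(σ ^ 1) '' rd by rw [pow_one], image_pow_add σ k 1]
      rw [h1]
      rintro y ⟨z, ⟨w, ⟨i, rfl⟩, rfl⟩, rfl⟩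
      have h2 : IsIntegral Ed (σ (d i)) := (hd i).isIntegral
      have h3 := isIntegral_twist σ hK k h2
      have h4 : IsIntegral (fAdj Ed (⇑(σ ^ k) '' rd)) ((σ ^ k) (σ (d i))) :=
        h3.of_le (fAdj_mono_base (le_fAdj K rd) _)
      exact isIntegral_fAdj_trans (hfd.image _) (ih) h4
  have Had : ∀ y ∈ rd, IsIntegral Ea y := by
    rintro y ⟨i, rfl⟩
    exact ((heq (d i)).2 (isIntegral_of_mem (subset_fAdj K rd ⟨i, rfl⟩)).isAlgebraic).isIntegral
  have Hda : ∀ y ∈ ra, IsIntegral Ed y := by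
    rintro y ⟨i, rfl⟩
    exact ((heq (a i)).1 (isIntegral_of_mem (subset_fAdj K ra ⟨i, rfl⟩)).isAlgebraic).isIntegral
  have Hca : ∀ y ∈ ra, IsIntegral Ec y := by
    rintro y ⟨i, rfl⟩
    exact (hac i).isIntegral
  have QaC : ∀ k : ℕ, ∀ y ∈ ⇑(σ ^ k) '' ra, IsIntegral Ec y := by
    intro k y hy
    have h1 : IsIntegral (fAdj Ec ra) y := (Qa k y hy).of_le (fAdj_mono_base (le_fAdj K rc) ra)
    exact isIntegral_fAdj_trans hfa Hca h1
  have QaD : ∀ k : ℕ, ∀ y ∈ ⇑(σ ^ k) '' ra, IsIntegral Ed y := by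
    intro k y hy
    have h1 : IsIntegral (fAdj Ed ra) y := (Qa k y hy).of_le (fAdj_mono_base (le_fAdj K rd) ra)
    exact isIntegral_fAdj_trans hfa Hda h1
  obtain ⟨N, hN⟩ : ∃ N : ℕ, rc ⊆ ↑(fAdj K (⋃ i ∈ Set.Iic N, ⇑(σ ^ i) '' ra)) := by
    have hdir : Directed (· ≤ ·) (fun N : ℕ => fAdj K (⋃ i ∈ Set.Iic N, ⇑(σ ^ i) '' ra)) := by
      intro m n
      exact ⟨max m n,
        fAdj_mono_set K (Set.biUnion_subset_biUnion_left (Set.Iic_subset_Iic.2 (le_max_left m n))),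
        fAdj_mono_set K (Set.biUnion_subset_biUnion_left (Set.Iic_subset_Iic.2 (le_max_right m n)))⟩
    have hEq : fAdj K (⋃ j : ℕ, ⇑(σ ^ j) '' ra)
        = ⨆ N : ℕ, fAdj K (⋃ i ∈ Set.Iic N, ⇑(σ ^ i) '' ra) := by
      apply le_antisymm
      · apply fAdj_le
        · exact (le_fAdj K _).trans
            (le_iSup (fun N : ℕ => fAdj K (⋃ i ∈ Set.Iic N, ⇑(σ ^ i) '' ra)) 0)
        · intro y hy
          rw [Set.mem_iUnion] at hy
          obtain ⟨j, hy⟩ := hy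
          have h1 : y ∈ fAdj K (⋃ i ∈ Set.Iic j, ⇑(σ ^ i) '' ra) :=
            subset_fAdj _ _ (Set.mem_biUnion (Set.mem_Iic.2 le_rfl) hy)
          exact (le_iSup (fun N : ℕ => fAdj K (⋃ i ∈ Set.Iic N, ⇑(σ ^ i) '' ra)) j) h1
      · refine iSup_le fun N => fAdj_mono_set K ?_
        exact Set.iUnion₂_subset fun i _ => Set.subset_iUnion (fun j : ℕ => ⇑(σ ^ j) '' ra) i
    have hmem : ∀ i : Fin p, ∃ N, c i ∈ fAdj K (⋃ i ∈ Set.Iic N, ⇑(σ ^ i) '' ra) := by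
      intro i
      have h0 := hc i
      rw [diffAdj, hEq] at h0
      exact (Subfield.mem_iSup_of_directed hdir).1 h0
    choose Nf hNf using hmem
    refine ⟨Finset.univ.sup Nf, ?_⟩
    rintro y ⟨i, rfl⟩
    exact fAdj_mono_set K (Set.biUnion_subset_biUnion_left
      (Set.Iic_subset_Iic.2 (Finset.le_sup (Finset.mem_univ i)))) (hNf i)
  have QcE : ∀ k : ℕ, ∀ y ∈ ⇑(σ ^ k) '' rc, IsIntegral Ec y := by
    intro k y hy
    obtain ⟨z, hz, rfl⟩ := hy
    have h1 := mem_fAdj_twist σ hK k (hN hz)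
    have h2 : ⇑(σ ^ k) '' (⋃ i ∈ Set.Iic N, ⇑(σ ^ i) '' ra)
        = ⋃ i ∈ Set.Iic N, ⇑(σ ^ (k+i)) '' ra := by
      rw [Set.image_iUnion₂]
      exact Set.iUnion₂_congr fun i _ => image_pow_add σ k i ra
    rw [h2] at h1
    have h3 : fAdj K (⋃ i ∈ Set.Iic N, ⇑(σ ^ (k+i)) '' ra)
        ≤ fAdj Ec (⋃ i ∈ Set.Iic N, ⇑(σ ^ (k+i)) '' ra) := fAdj_mono_base (le_fAdj K rc) _
    refine isIntegral_of_mem_fAdj ((Set.finite_Iic N).biUnion fun i _ => hfa.image _)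
      (fun z' hz' => ?_) (h3 h1)
    rw [Set.mem_iUnion₂] at hz'
    obtain ⟨i, _, hz'⟩ := hz'
    exact QaC (k+i) z' hz' 
  have RcA : ∀ y ∈ rc, IsIntegral Ea y := by
    intro y hy
    refine isIntegral_of_mem_fAdj (hfinU ra hfa _ (Set.finite_Iic N))
      (fun z hz => by
        rw [Set.mem_iUnion₂] at hz
        obtain ⟨i, _, hz⟩ := hz
        exact Qa i z hz) (fAdj_mono_base (le_fAdj K ra) _ (hN hy))
  have QcA : ∀ k : ℕ, ∀ y ∈ ⇑(σ ^ k) '' rc, IsIntegral Ea y := by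
    intro k y hy
    have h1 : IsIntegral (fAdj Ea rc) y := (QcE k y hy).of_le (fAdj_mono_base (le_fAdj K ra) rc)
    exact isIntegral_fAdj_trans hfc RcA h1
  have QdA : ∀ k : ℕ, ∀ y ∈ ⇑(σ ^ k) '' rd, IsIntegral Ea y := by
    intro k y hy
    have h1 : IsIntegral (fAdj Ea rd) y := (Qd k y hy).of_le (fAdj_mono_base (le_fAdj K ra) rd)
    exact isIntegral_fAdj_trans hfd Had h1
  have QsA : ∀ k : ℕ, ∀ y ∈ ⇑(σ ^ k) '' s, IsIntegral Ea y := by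
    intro k y hy
    rw [hs_def, Set.image_union] at hy
    rcases hy with h | h
    · exact QcA k y h
    · exact QdA k y h
  have Qs : ∀ k : ℕ, ∀ y ∈ ⇑(σ ^ k) '' s, IsIntegral Es y := by
    intro k y hy
    rw [hs_def, Set.image_union] at hy
    rcases hy with h | h
    · exact (QcE k y h).of_le hEcEs
    · exact (Qd k y h).of_le hEdEs
  have HraEs : ∀ y ∈ ra, IsIntegral Es y := fun y hy => (Hca y hy).of_le hEcEs
  -- chains
  have EsGs : ∀ k, Es ≤ chainF σ K s k := fun k => le_chainF σ K s
  have ld_pos : ∀ k, 0 < ldSeq σ K s k := by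
    intro k
    rw [ldSeq_eq_deg]
    refine deg_pos (hfs.image _) (fun y hy => ?_)
    exact (Qs (k+1) y hy).of_le (EsGs k)
  have ldd_pos : ∀ k, 0 < ldSeq σ K rd k := by
    intro k
    rw [ldSeq_eq_deg]
    refine deg_pos (hfd.image _) (fun y hy => ?_)
    exact (Qd (k+1) y hy).of_le (le_chainF σ K rd)
  -- Bound 1 chains
  have dd_le : ∀ k, ddSeq σ K ra k ≤ deg Ea s * ddSeq σ K s k * deg Es ra := by
    intro k
    have hint1 : ∀ y ∈ ⇑(σ ^ k) '' s ∪ ⇑(σ ^ k) '' ra, IsIntegral Ea y := by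
      rintro y (h | h)
      · exact QsA k y h
      · exact Qa k y h
    have step1 : ddSeq σ K ra k ≤ deg Ea (⇑(σ ^ k) '' s ∪ ⇑(σ ^ k) '' ra) := by
      rw [ddSeq_eq_deg]
      exact deg_mono_set Set.subset_union_right ((hfs.image _).union (hfa.image _)) hint1
    have hintTw : ∀ y ∈ ⇑(σ ^ k) '' ra, IsIntegral (fAdj K (⇑(σ ^ k) '' s)) y := by
      rintro y ⟨z, hz, rfl⟩
      exact isIntegral_twist σ hK k ((Hca z hz).of_le hEcEs)
    have step3 : deg (fAdj Ea (⇑(σ ^ k) '' s)) (⇑(σ ^ k) '' ra) ≤ deg Es ra := by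
      have h1 := deg_anti_base (fAdj_mono_base (le_fAdj K ra) (⇑(σ ^ k) '' s)) (hfa.image _) hintTw
      rw [deg_twist σ hK k s ra] at h1
      rwa [← hEs_def] at h1
    have hint2 : ∀ y ∈ s ∪ ⇑(σ ^ k) '' s, IsIntegral Ea y := by
      rintro y (h | h)
      · exact QsA 0 y (by rw [image_pow_zero]; exact h)
      · exact QsA k y h
    have hbase : Es ≤ fAdj Ea s := by
      rw [hEs_def]
      exact fAdj_mono_base (le_fAdj K ra) s
    have step4 : deg Ea (⇑(σ ^ k) '' s) ≤ deg Ea s * ddSeq σ K s k := by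
      calc deg Ea (⇑(σ ^ k) '' s) ≤ deg Ea (s ∪ ⇑(σ ^ k) '' s) :=
            deg_mono_set Set.subset_union_right (hfs.union (hfs.image _)) hint2
        _ = deg Ea s * deg (fAdj Ea s) (⇑(σ ^ k) '' s) := deg_union _ _ _
        _ ≤ deg Ea s * deg Es (⇑(σ ^ k) '' s) :=
            Nat.mul_le_mul_left _ (deg_anti_base hbase (hfs.image _) (Qs k))
        _ = deg Ea s * ddSeq σ K s k := by rw [ddSeq_eq_deg σ K s k, ← hEs_def]
    calc ddSeq σ K ra k ≤ deg Ea (⇑(σ ^ k) '' s ∪ ⇑(σ ^ k) '' ra) := step1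
      _ = deg Ea (⇑(σ ^ k) '' s) * deg (fAdj Ea (⇑(σ ^ k) '' s)) (⇑(σ ^ k) '' ra) :=
          deg_union _ _ _
      _ ≤ deg Ea (⇑(σ ^ k) '' s) * deg Es ra := Nat.mul_le_mul_left _ step3
      _ ≤ (deg Ea s * ddSeq σ K s k) * deg Es ra := Nat.mul_le_mul_right _ step4
  have dds_le_prod : ∀ k, ddSeq σ K s k ≤ ∏ j ∈ Finset.range k, ldSeq σ K s j := by
    intro k
    have h0 : ddSeq σ K s k = deg Es (⇑(σ ^ k) '' s) := rfl
    rw [h0, deg_eq_relfinrank, ← ldSeq_prod σ K s k]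
    have hle1 : fAdj Es (⇑(σ ^ k) '' s) ≤ chainF σ K s k := by
      apply fAdj_le (EsGs k)
      exact subset_chainF σ K s le_rfl
    have hpos : 0 < Subfield.relfinrank (chainF σ K s 0) (chainF σ K s k) := by
      rw [ldSeq_prod σ K s k]
      exact Finset.prod_pos fun j _ => ld_pos j
    rw [show Es = chainF σ K s 0 from (chainF_zero σ K s).symm] at hle1 ⊢
    exact relfinrank_le (le_fAdj _ _) hle1 hpos
  -- eventual constants
  obtain ⟨k1, hk1⟩ := eventually_atTop.1 hLcd
  obtain ⟨k2, hk2⟩ := eventually_atTop.1 hLd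
  set k0 := max k1 k2 with hk0_def
  have hk0s : ∀ j, k0 ≤ j → ldSeq σ K s j = Lcd := fun j hj => hk1 j ((le_max_left _ _).trans hj)
  have hk0d : ∀ j, k0 ≤ j → ldSeq σ K rd j = Ld := fun j hj => hk2 j ((le_max_right _ _).trans hj)
  have Lcd_pos : 0 < Lcd := lt_of_lt_of_eq (ld_pos k0) (hk0s k0 le_rfl)
  have Ld_pos : 0 < Ld := lt_of_lt_of_eq (ldd_pos k0) (hk0d k0 le_rfl)
  -- Bound 1 conclusion
  have hDa_le : Da ≤ (Lcd : ℝ) := by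
    set C : ℕ := deg Ea s * (∏ j ∈ Finset.range k0, ldSeq σ K s j) * deg Es ra with hC_def
    have hsEa : ∀ y ∈ s, IsIntegral Ea y := fun y hy => QsA 0 y (by rw [image_pow_zero]; exact hy)
    have hC_pos : 0 < C := by
      rw [hC_def]
      exact Nat.mul_pos (Nat.mul_pos (deg_pos hfs hsEa)
        (Finset.prod_pos fun j _ => ld_pos j)) (deg_pos hfa HraEs)
    have hbound : ∀ k, k0 ≤ k → ddSeq σ K ra k ≤ C * Lcd ^ k := by
      intro k hk
      obtain ⟨m, rfl⟩ := Nat.exists_eq_add_of_le hk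
      have h3 : ∏ j ∈ Finset.range (k0+m), ldSeq σ K s j
          ≤ (∏ j ∈ Finset.range k0, ldSeq σ K s j) * Lcd ^ (k0+m) := by
        rw [Finset.prod_range_add]
        refine Nat.mul_le_mul_left _ ?_
        have he : ∀ j ∈ Finset.range m, ldSeq σ K s (k0 + j) = Lcd :=
          fun j _ => hk0s (k0+j) (Nat.le_add_right _ _)
        rw [Finset.prod_congr rfl he, Finset.prod_const, Finset.card_range]
        exact Nat.pow_le_pow_right Lcd_pos (by omega)
      calc ddSeq σ K ra (k0+m) ≤ deg Ea s * ddSeq σ K s (k0+m) * deg Es ra := dd_le _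
        _ ≤ deg Ea s * ((∏ j ∈ Finset.range k0, ldSeq σ K s j) * Lcd ^ (k0+m)) * deg Es ra := by
            refine Nat.mul_le_mul_right _ (Nat.mul_le_mul_left _ ?_)
            exact (dds_le_prod _).trans h3
        _ = C * Lcd ^ (k0+m) := by rw [hC_def]; ring
    have hC1 : (0:ℝ) < (C:ℝ) := by exact_mod_cast hC_pos
    have h0 : Tendsto (fun k : ℕ => 1/(k:ℝ)) atTop (nhds 0) := tendsto_one_div_atTop_nhds_zero_nat
    have h1 : Tendsto (fun k : ℕ => (C:ℝ) ^ (1/(k:ℝ))) atTop (nhds 1) := by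
      have hcont : ContinuousAt (fun y : ℝ => (C:ℝ) ^ y) 0 :=
        Real.continuousAt_const_rpow (ne_of_gt hC1)
      have h2 := hcont.tendsto.comp h0
      simpa [Real.rpow_zero, Function.comp_def] using h2
    have htend : Tendsto (fun k : ℕ => (C:ℝ) ^ (1/(k:ℝ)) * (Lcd:ℝ)) atTop (nhds (Lcd:ℝ)) := by
      simpa using h1.mul_const (Lcd:ℝ)
    refine le_of_tendsto_of_tendsto hDa htend ?_
    filter_upwards [eventually_ge_atTop k0, eventually_ge_atTop 1] with k hk hk1'
    have hkR : (0:ℝ) < (k:ℝ) := by exact_mod_cast hk1'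
    have h1' : ((ddSeq σ K ra k : ℕ):ℝ) ≤ (C:ℝ) * (Lcd:ℝ)^k := by
      have := hbound k hk
      push_cast
      exact_mod_cast this
    have h2' : ((ddSeq σ K ra k : ℕ):ℝ) ^ (1/(k:ℝ)) ≤ ((C:ℝ) * (Lcd:ℝ)^k) ^ (1/(k:ℝ)) :=
      Real.rpow_le_rpow (by positivity) h1' (by positivity)
    have h3' : ((C:ℝ) * (Lcd:ℝ)^k) ^ (1/(k:ℝ)) = (C:ℝ)^(1/(k:ℝ)) * (Lcd:ℝ) := by
      rw [Real.mul_rpow (le_of_lt hC1) (by positivity), ← Real.rpow_natCast (Lcd:ℝ) k,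
        ← Real.rpow_mul (by positivity), mul_one_div, div_self (ne_of_gt hkR), Real.rpow_one]
    exact h2'.trans (le_of_eq h3')
  -- Bound 2
  have W1 : ∀ m j : ℕ, j ≤ m → ⇑(σ ^ j) '' rc ⊆ ↑(fAdj K (rc ∪ ⇑(σ ^ m) '' rc)) := by
    intro m j
    induction j with
    | zero =>
      intro _
      rw [image_pow_zero]
      exact (Set.subset_union_left).trans (subset_fAdj _ _)
    | succ j ih =>
      intro hjm
      have hj : j ≤ m := by omega
      have hl : 0 < m - j := by omega
      rintro y ⟨z, ⟨i, rfl⟩, rfl⟩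
      have h1 : σ (c i) ∈ fAdj K (rc ∪ ⇑(σ ^ (m-j)) '' rc) := hcσ (m-j) hl i
      have h2 := mem_fAdj_twist σ hK j h1
      have h3 : ⇑(σ ^ j) '' (rc ∪ ⇑(σ ^ (m-j)) '' rc) = ⇑(σ ^ j) '' rc ∪ ⇑(σ ^ m) '' rc := by
        rw [Set.image_union, image_pow_add, show j + (m-j) = m by omega]
      rw [h3] at h2
      have h4 : fAdj K (⇑(σ ^ j) '' rc ∪ ⇑(σ ^ m) '' rc) ≤ fAdj K (rc ∪ ⇑(σ ^ m) '' rc) := by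
        apply fAdj_le (le_fAdj _ _)
        apply Set.union_subset (ih hj)
        exact (Set.subset_union_right).trans (subset_fAdj _ _)
      have h5 : (σ ^ j) (σ (c i)) = (σ ^ (j+1)) (c i) := by
        rw [pow_succ]
        rfl
      rw [h5] at h2
      exact h4 h2
  have GsW : ∀ m, chainF σ K s m
      = fAdj K ((rc ∪ ⇑(σ ^ m) '' rc) ∪ ⋃ i ∈ Set.Iic m, ⇑(σ ^ i) '' rd) := by
    intro m
    apply le_antisymm
    · show fAdj K _ ≤ _
      apply fAdj_le (le_fAdj _ _)
      refine Set.iUnion₂_subset fun i hi => ?_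
      rw [Set.mem_Iic] at hi
      rw [hs_def, Set.image_union]
      apply Set.union_subset
      · refine (W1 m i hi).trans ?_
        exact fun y hy => (fAdj_mono_set K Set.subset_union_left) hy
      · exact (Set.subset_biUnion_of_mem (u := fun i => ⇑(σ ^ i) '' rd)
          (Set.mem_Iic.2 hi)).trans ((Set.subset_union_right).trans (subset_fAdj _ _))
    · apply fAdj_le (le_fAdj _ _)
      apply Set.union_subset
      · apply Set.union_subset
        · exact hrcs.trans (fun y hy => subset_chainF σ K s (Nat.zero_le m)
            (by rw [image_pow_zero]; exact hy))
        · exact (Set.image_mono hrcs).trans (subset_chainF σ K s le_rfl)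
      · refine Set.iUnion₂_subset fun i hi => ?_
        rw [Set.mem_Iic] at hi
        exact (Set.image_mono hrds).trans (subset_chainF σ K s hi)
  set m0 := deg (fAdj K (⋃ i ∈ Set.Iic N, ⇑(σ ^ i) '' rd)) (⋃ i ∈ Set.Iic N, ⇑(σ ^ i) '' ra)
    with hm0_def
  have key2 : ∀ k, k0 < k → Lcd ^ (k - k0) ≤ Ld ^ (k + N - k0) * m0 := by
    intro k hk
    obtain ⟨m, rfl⟩ := Nat.exists_eq_add_of_le (le_of_lt hk)
    rw [show k0 + m - k0 = m by omega, show k0 + m + N - k0 = m + N by omega]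
    have KP : K ≤ chainF σ K s k0 := (le_fAdj K s).trans (le_chainF σ K s)
    have EdP : Ed ≤ chainF σ K s k0 := (fAdj_mono_set K hrds).trans (le_chainF σ K s)
    have EcP : Ec ≤ chainF σ K s k0 := (fAdj_mono_set K hrcs).trans (le_chainF σ K s)
    have e1 : Subfield.relfinrank (chainF σ K s k0) (chainF σ K s (k0+m)) = Lcd ^ m := by
      rw [relfinrank_chain (chainF σ K s) (chainF_mono σ K s) k0 m]
      have he : ∀ j ∈ Finset.range m,
          Subfield.relfinrank (chainF σ K s (k0+j)) (chainF σ K s (k0+j+1)) = Lcd := by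
        intro j _
        rw [← ldSeq_eq_relfinrank]
        exact hk0s (k0+j) (Nat.le_add_right _ _)
      rw [Finset.prod_congr rfl he, Finset.prod_const, Finset.card_range]
    have GdJ : ∀ m', chainF σ K rd m' ≤ chainJ σ (chainF σ K s k0) rd k0 m' := by
      intro m'
      show fAdj K _ ≤ _
      apply fAdj_le (KP.trans (le_chainJ σ (chainF σ K s k0) rd k0 m'))
      refine Set.iUnion₂_subset fun i hi => ?_
      rw [Set.mem_Iic] at hi
      rcases le_or_gt i k0 with h' | h'
      · refine ((Set.image_mono hrds).trans (subset_chainF σ K s h')).trans ?_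
        exact fun y hy => (le_chainJ σ (chainF σ K s k0) rd k0 m') hy
      · exact (Set.subset_biUnion_of_mem (u := fun i => ⇑(σ ^ i) '' rd)
          (Set.mem_Ioc.2 ⟨h', hi⟩)).trans (subset_fAdj _ _)
    have Jstep : ∀ m', k0 ≤ m' →
        Subfield.relfinrank (chainJ σ (chainF σ K s k0) rd k0 m') (chainJ σ (chainF σ K s k0) rd k0 (m'+1)) ≤ Ld := by
      intro m' hm'
      rw [chainJ_succ σ (chainF σ K s k0) rd hm', ← deg_eq_relfinrank]
      have h1 := deg_anti_base (GdJ m') (hfd.image _)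
        (fun y hy => (Qd (m'+1) y hy).of_le (le_chainF σ K rd))
      refine h1.trans ?_
      rw [← ldSeq_eq_deg σ K rd m']
      exact le_of_eq (hk0d m' hm')
    have Jprod : Subfield.relfinrank (chainF σ K s k0) (chainJ σ (chainF σ K s k0) rd k0 (k0+m+N)) ≤ Ld ^ (m + N) := by
      have hch := relfinrank_chain (chainJ σ (chainF σ K s k0) rd k0)
        (chainJ_mono σ (chainF σ K s k0) rd k0) k0 (m+N)
      rw [chainJ_base] at hch
      rw [show k0 + m + N = k0 + (m+N) by omega, hch]
      refine (Finset.prod_le_pow_card _ _ Ld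
        (fun j _ => Jstep (k0+j) (Nat.le_add_right _ _))).trans ?_
      rw [Finset.card_range]
    have hAeq : (⋃ i ∈ Set.Iic N, ⇑(σ ^ (k0+m+i)) '' ra) = ⇑(σ ^ (k0+m)) '' (⋃ i ∈ Set.Iic N, ⇑(σ ^ i) '' ra) := by
      rw [Set.image_iUnion₂]
      exact Set.iUnion₂_congr fun i _ => (image_pow_add σ (k0+m) i ra).symm
    have hDeq : (⋃ i ∈ Set.Iic N, ⇑(σ ^ (k0+m+i)) '' rd) = ⇑(σ ^ (k0+m)) '' (⋃ i ∈ Set.Iic N, ⇑(σ ^ i) '' rd) := by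
      rw [Set.image_iUnion₂]
      exact Set.iUnion₂_congr fun i _ => (image_pow_add σ (k0+m) i rd).symm
    have hfinD : Set.Finite (⋃ i ∈ Set.Ioc k0 (k0+m+N), ⇑(σ ^ i) '' rd) := hfinU rd hfd _ (Set.finite_Ioc _ _)
    have hfinA : Set.Finite (⋃ i ∈ Set.Iic N, ⇑(σ ^ (k0+m+i)) '' ra) := (Set.finite_Iic N).biUnion fun i _ => hfa.image _
    have h7 : fAdj K (⋃ i ∈ Set.Iic N, ⇑(σ ^ (k0+m+i)) '' ra) ≤ fAdj (chainF σ K s k0) ((⋃ i ∈ Set.Ioc k0 (k0+m+N), ⇑(σ ^ i) '' rd) ∪ (⋃ i ∈ Set.Iic N, ⇑(σ ^ (k0+m+i)) '' ra)) :=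
      fAdj_le (KP.trans (le_fAdj _ _)) ((Set.subset_union_right).trans (subset_fAdj _ _))
    have hGsM : chainF σ K s (k0+m) ≤ fAdj (chainF σ K s k0) ((⋃ i ∈ Set.Ioc k0 (k0+m+N), ⇑(σ ^ i) '' rd) ∪ (⋃ i ∈ Set.Iic N, ⇑(σ ^ (k0+m+i)) '' ra)) := by
      rw [GsW (k0+m)]
      apply fAdj_le (KP.trans (le_fAdj _ _))
      apply Set.union_subset
      · apply Set.union_subset
        · have hsP : s ⊆ ↑(chainF σ K s k0) := fun y hy =>
            subset_chainF σ K s (Nat.zero_le k0) (by rw [image_pow_zero]; exact hy)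
          have hPM : ↑(chainF σ K s k0) ⊆
              (fAdj (chainF σ K s k0) ((⋃ i ∈ Set.Ioc k0 (k0+m+N), ⇑(σ ^ i) '' rd)
                ∪ (⋃ i ∈ Set.Iic N, ⇑(σ ^ (k0+m+i)) '' ra)) : Set U) := fun y hy =>
            (le_fAdj (chainF σ K s k0) _) hy
          exact hrcs.trans (hsP.trans hPM)
        · intro y hy
          obtain ⟨z, hz, rfl⟩ := hy
          have h1 := mem_fAdj_twist σ hK (k0+m) (hN hz)
          rw [← hAeq] at h1
          exact h7 h1
      · refine Set.iUnion₂_subset fun i hi => ?_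
        rw [Set.mem_Iic] at hi
        rcases le_or_gt i k0 with h' | h'
        · refine ((Set.image_mono hrds).trans (subset_chainF σ K s h')).trans ?_
          exact fun y hy => (le_fAdj (chainF σ K s k0) _) hy
        · exact (Set.subset_biUnion_of_mem (u := fun i => ⇑(σ ^ i) '' rd)
            (Set.mem_Ioc.2 ⟨h', by omega⟩)).trans
            ((Set.subset_union_left).trans (subset_fAdj _ _))
    have hintD : ∀ y ∈ (⋃ i ∈ Set.Ioc k0 (k0+m+N), ⇑(σ ^ i) '' rd), IsIntegral (chainF σ K s k0) y := by
      intro y hy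
      rw [Set.mem_iUnion₂] at hy
      obtain ⟨i, _, hy⟩ := hy
      exact (Qd i y hy).of_le EdP
    have hintA : ∀ y ∈ (⋃ i ∈ Set.Iic N, ⇑(σ ^ (k0+m+i)) '' ra), IsIntegral (chainF σ K s k0) y := by
      intro y hy
      rw [Set.mem_iUnion₂] at hy
      obtain ⟨i, _, hy⟩ := hy
      exact (QaC (k0+m+i) y hy).of_le EcP
    have hposM : 0 < Subfield.relfinrank (chainF σ K s k0) (fAdj (chainF σ K s k0) ((⋃ i ∈ Set.Ioc k0 (k0+m+N), ⇑(σ ^ i) '' rd) ∪ (⋃ i ∈ Set.Iic N, ⇑(σ ^ (k0+m+i)) '' ra))) :=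
      relfinrank_fAdj_pos (hfinD.union hfinA) (fun y hy => hy.elim (hintD y) (hintA y))
    have h2 : Subfield.relfinrank (chainF σ K s k0) (chainF σ K s (k0+m))
        ≤ Subfield.relfinrank (chainF σ K s k0) (fAdj (chainF σ K s k0) ((⋃ i ∈ Set.Ioc k0 (k0+m+N), ⇑(σ ^ i) '' rd) ∪ (⋃ i ∈ Set.Iic N, ⇑(σ ^ (k0+m+i)) '' ra))) :=
      relfinrank_le (chainF_monotone σ K s (by omega)) hGsM hposM
    have h3 : Subfield.relfinrank (chainF σ K s k0) (fAdj (chainF σ K s k0) ((⋃ i ∈ Set.Ioc k0 (k0+m+N), ⇑(σ ^ i) '' rd) ∪ (⋃ i ∈ Set.Iic N, ⇑(σ ^ (k0+m+i)) '' ra)))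
        = deg (chainF σ K s k0) (⋃ i ∈ Set.Ioc k0 (k0+m+N), ⇑(σ ^ i) '' rd) * deg (fAdj (chainF σ K s k0) (⋃ i ∈ Set.Ioc k0 (k0+m+N), ⇑(σ ^ i) '' rd)) (⋃ i ∈ Set.Iic N, ⇑(σ ^ (k0+m+i)) '' ra) := by
      rw [← deg_eq_relfinrank, deg_union]
    have h4 : deg (chainF σ K s k0) (⋃ i ∈ Set.Ioc k0 (k0+m+N), ⇑(σ ^ i) '' rd) ≤ Ld ^ (m + N) := by
      rw [deg_eq_relfinrank]
      exact Jprod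
    have h5 : deg (fAdj (chainF σ K s k0) (⋃ i ∈ Set.Ioc k0 (k0+m+N), ⇑(σ ^ i) '' rd)) (⋃ i ∈ Set.Iic N, ⇑(σ ^ (k0+m+i)) '' ra) ≤ m0 := by
      have hbase : fAdj K (⋃ i ∈ Set.Iic N, ⇑(σ ^ (k0+m+i)) '' rd) ≤ fAdj (chainF σ K s k0) (⋃ i ∈ Set.Ioc k0 (k0+m+N), ⇑(σ ^ i) '' rd) := by
        apply fAdj_le (KP.trans (le_fAdj _ _))
        refine Set.iUnion₂_subset fun i hi => ?_
        rw [Set.mem_Iic] at hi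
        exact (Set.subset_biUnion_of_mem (u := fun j => ⇑(σ ^ j) '' rd)
          (Set.mem_Ioc.2 ⟨by omega, by omega⟩)).trans (subset_fAdj _ _)
      have hintTwA : ∀ y ∈ (⋃ i ∈ Set.Iic N, ⇑(σ ^ (k0+m+i)) '' ra), IsIntegral (fAdj K (⋃ i ∈ Set.Iic N, ⇑(σ ^ (k0+m+i)) '' rd)) y := by
        intro y hy
        rw [hAeq] at hy
        obtain ⟨z, hz, rfl⟩ := hy
        have hz' : IsIntegral (fAdj K (⋃ i ∈ Set.Iic N, ⇑(σ ^ i) '' rd)) z := by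
          rw [Set.mem_iUnion₂] at hz
          obtain ⟨i, _, hz⟩ := hz
          exact (QaD i z hz).of_le (fAdj_mono_set K (hsub0 rd N))
        have h8 := isIntegral_twist σ hK (k0+m) hz'
        rwa [← hDeq] at h8
      have h6 := deg_anti_base hbase hfinA hintTwA
      refine h6.trans ?_
      rw [hAeq, hDeq, deg_twist σ hK (k0+m), hm0_def]
    calc Lcd ^ m = Subfield.relfinrank (chainF σ K s k0) (chainF σ K s (k0+m)) := e1.symm
      _ ≤ Subfield.relfinrank (chainF σ K s k0) (fAdj (chainF σ K s k0) ((⋃ i ∈ Set.Ioc k0 (k0+m+N), ⇑(σ ^ i) '' rd) ∪ (⋃ i ∈ Set.Iic N, ⇑(σ ^ (k0+m+i)) '' ra))) := h2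
      _ = deg (chainF σ K s k0) (⋃ i ∈ Set.Ioc k0 (k0+m+N), ⇑(σ ^ i) '' rd) * deg (fAdj (chainF σ K s k0) (⋃ i ∈ Set.Ioc k0 (k0+m+N), ⇑(σ ^ i) '' rd)) (⋃ i ∈ Set.Iic N, ⇑(σ ^ (k0+m+i)) '' ra) := h3
      _ ≤ Ld ^ (m + N) * m0 := Nat.mul_le_mul h4 h5
  have hm0_pos : 0 < m0 := by
    refine deg_pos (hfinU ra hfa _ (Set.finite_Iic N)) (fun y hy => ?_)
    rw [Set.mem_iUnion₂] at hy
    obtain ⟨i, _, hy⟩ := hy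
    refine (QaD i y hy).of_le (fAdj_mono_set K ?_)
    exact (hsub0 rd N)
  have hLcdLd : Lcd ≤ Ld := by
    by_contra hlt
    push_neg at hlt
    have hr : (1:ℝ) < (Lcd:ℝ)/(Ld:ℝ) := by
      rw [lt_div_iff₀ (by exact_mod_cast Ld_pos)]
      push_cast
      linarith [show (Ld:ℝ) < (Lcd:ℝ) by exact_mod_cast hlt]
    obtain ⟨j, hj⟩ := pow_unbounded_of_one_lt ((Ld:ℝ)^N * m0) hr
    have hj1 : 1 ≤ j := by
      by_contra hj0
      push_neg at hj0
      interval_cases j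
      simp at hj
      have h1 : (1:ℝ) ≤ (Ld:ℝ)^N := by exact_mod_cast Nat.one_le_pow N Ld Ld_pos
      have h2 : (1:ℝ) ≤ (m0:ℝ) := by exact_mod_cast hm0_pos
      nlinarith
    have hkey := key2 (k0 + j) (by omega)
    rw [show k0 + j - k0 = j by omega, show k0 + j + N - k0 = j + N by omega] at hkey
    have hkeyR : (Lcd:ℝ)^j ≤ (Ld:ℝ)^(j+N) * m0 := by exact_mod_cast hkey
    rw [pow_add] at hkeyR
    have hLdj : (0:ℝ) < (Ld:ℝ)^j := by positivity
    have : ((Lcd:ℝ)/(Ld:ℝ))^j ≤ (Ld:ℝ)^N * m0 := by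
      rw [div_pow, div_le_iff₀ hLdj]
      calc (Lcd:ℝ)^j ≤ (Ld:ℝ)^j * (Ld:ℝ)^N * m0 := by linarith [hkeyR]
        _ = (Ld:ℝ)^N * m0 * (Ld:ℝ)^j := by ring
    linarith
  have hLcdR : (Lcd : ℝ) ≤ Da := by
    rw [← hLdDa]
    exact_mod_cast hLcdLd
  linarith
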